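/- Let T be a map of a compact interval Ω of class V with k monotone inverse branches b_1,...,b_k whose images I_1,...,I_k have pairwise disjoint interiors, and let L₀f(x) = (1/k)Σ_j f(b_j(x)). Then for every f of bounded p-variation, BV_p(L₀f) ≤ k^{-1/p}·BV_p(f). -/

import Mathlib

open Set

/-- The set of `p`-variations of `f` along finite increasing partitions with points in `Ω`. -/
def pVarSet (p : ℝ) (f : ℝ → ℝ) (Ω : Set ℝ) : Set ℝ :=
  {r : ℝ | ∃ n : ℕ, ∃ x : Fin (n + 1) → ℝ, StrictMono x ∧ (∀ i, x i ∈ Ω) ∧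
    r = (∑ j : Fin n, |f (x j.succ) - f (x j.castSucc)| ^ p) ^ (1 / p)}

/-- The total `p`-variation of `f` on `Ω`. -/
noncomputable def BVp (p : ℝ) (f : ℝ → ℝ) (Ω : Set ℝ) : ℝ := sSup (pVarSet p f Ω)

lemma zero_mem_pVarSet {p : ℝ} (hp : 1 ≤ p) {f : ℝ → ℝ} {a c : ℝ} (hac : a ≤ c) :
    (0:ℝ) ∈ pVarSet p f (Set.Icc a c) := by
  have hp0 : p ≠ 0 := by intro h; rw [h] at hp; linarith
  refine ⟨0, fun _ => a, fun i j h => absurd h (by omega), fun _ => ⟨le_refl a, hac⟩, ?_⟩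
  rw [show (∑ j : Fin 0, |f ((fun _ => a) j.succ) - f ((fun _ => a) j.castSucc)| ^ p) = 0
      from by simp,
    Real.zero_rpow (one_div_ne_zero hp0)]

lemma bvp_nonneg {p : ℝ} (hp : 1 ≤ p) {f : ℝ → ℝ} {a c : ℝ} (hac : a ≤ c)
    (hbv : BddAbove (pVarSet p f (Set.Icc a c))) : 0 ≤ BVp p f (Set.Icc a c) :=
  le_csSup hbv (zero_mem_pVarSet hp hac)

/-- split a sum deleting one term -/
lemma sum_delete (T : ℕ → ℝ) {m i : ℕ} (hi : i ≤ m) :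
    ∑ t ∈ Finset.range (m+1), T t
      = ∑ t ∈ Finset.range i, T t + (T i + ∑ t ∈ Finset.range (m - i), T (i + t + 1)) := by
  have e1 : m + 1 = i + (m - i + 1) := by omega
  rw [e1, Finset.sum_range_add, Finset.sum_range_succ']
  simp only [← Nat.add_assoc, Nat.add_zero]
  ring

/-- Lemma A: a monotone (not nec. strict) sequence gives a sum bounded by `BVp^p`. -/
lemma monotone_sum_le {p : ℝ} (hp : 1 ≤ p) {f : ℝ → ℝ} {a c : ℝ} (hac : a ≤ c)
    (hbv : BddAbove (pVarSet p f (Set.Icc a c))) :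
    ∀ m (y : ℕ → ℝ), (∀ i j, i ≤ j → j ≤ m → y i ≤ y j) → (∀ i, i ≤ m → y i ∈ Set.Icc a c) →
    ∑ i ∈ Finset.range m, |f (y (i+1)) - f (y i)| ^ p ≤ (BVp p f (Set.Icc a c)) ^ p := by
  have hp0 : (0:ℝ) < p := lt_of_lt_of_le one_pos hp
  have hB0 : 0 ≤ BVp p f (Set.Icc a c) := bvp_nonneg hp hac hbv
  intro m
  induction m with
  | zero => intro y _ _; simpa using Real.rpow_nonneg hB0 p
  | succ m IH =>
    intro y hmono hmem
    by_cases hs : ∀ i, i < m + 1 → y i < y (i + 1)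
    · set S := ∑ i ∈ Finset.range (m+1), |f (y (i+1)) - f (y i)| ^ p with hS
      have hS0 : 0 ≤ S := Finset.sum_nonneg fun i _ => Real.rpow_nonneg (abs_nonneg _) p
      have hmem' : S ^ (1/p) ∈ pVarSet p f (Set.Icc a c) := by
        refine ⟨m + 1, fun t => y t, ?_, fun i => hmem i (by omega), ?_⟩
        · refine Fin.strictMono_iff_lt_succ.mpr fun i => ?_
          simpa using hs i i.isLt
        · have : S = ∑ j : Fin (m+1), |f (y (j.val+1)) - f (y j.val)| ^ p := by
            rw [hS, ← Fin.sum_univ_eq_sum_range (fun i => |f (y (i+1)) - f (y i)| ^ p) (m+1)]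
          rw [this]
          congr 1
      have hle : S ^ (1/p) ≤ BVp p f (Set.Icc a c) := le_csSup hbv hmem'
      calc S = (S ^ (1/p)) ^ p := by rw [one_div, Real.rpow_inv_rpow hS0 hp0.ne']
        _ ≤ (BVp p f (Set.Icc a c)) ^ p :=
            Real.rpow_le_rpow (Real.rpow_nonneg hS0 _) hle hp0.le
    · push_neg at hs
      obtain ⟨i, hi, hyi⟩ := hs
      have heq : y i = y (i + 1) := le_antisymm (hmono i (i+1) (by omega) (by omega)) hyi
      set y' : ℕ → ℝ := fun t => if t ≤ i then y t else y (t + 1) with hy'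
      have hy'eq1 : ∀ t, t ≤ i → y' t = y t := by
        intro t ht; simp only [hy']; rw [if_pos ht]
      have hy'eq2 : ∀ t, ¬ t ≤ i → y' t = y (t + 1) := by
        intro t ht; simp only [hy']; rw [if_neg ht]
      have hTi : |f (y (i+1)) - f (y i)| ^ p = 0 := by
        rw [heq, sub_self, abs_zero, Real.zero_rpow hp0.ne']
      have key : ∑ t ∈ Finset.range (m+1), |f (y (t+1)) - f (y t)| ^ p
          = ∑ t ∈ Finset.range m, |f (y' (t+1)) - f (y' t)| ^ p := by
        rw [sum_delete (fun t => |f (y (t+1)) - f (y t)| ^ p) (by omega : i ≤ m)]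
        have e2 : m = i + (m - i) := by omega
        have hsplit : ∑ t ∈ Finset.range m, |f (y' (t+1)) - f (y' t)| ^ p
            = ∑ t ∈ Finset.range i, |f (y' (t+1)) - f (y' t)| ^ p
              + ∑ t ∈ Finset.range (m - i), |f (y' (i + t + 1)) - f (y' (i + t))| ^ p := by
          conv_lhs => rw [e2]
          rw [Finset.sum_range_add]
        rw [hsplit, hTi, zero_add]
        congr 1
        · refine Finset.sum_congr rfl fun t ht => ?_
          have ht' : t < i := Finset.mem_range.mp ht
          have h1 : y' t = y t := by rw [hy']; simp only [if_pos (by omega : t ≤ i)]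
          have h2 : y' (t+1) = y (t+1) := by rw [hy']; simp only [if_pos (by omega : t + 1 ≤ i)]
          rw [h1, h2]
        · refine Finset.sum_congr rfl fun t ht => ?_
          have h1 : y' (i + t) = y (i + t + 1) := by
            by_cases h : i + t ≤ i
            · have ht0 : t = 0 := by omega
              subst ht0
              rw [hy'eq1 _ h]
              exact heq
            · exact hy'eq2 _ h
          have h2 : y' (i + t + 1) = y (i + t + 2) := hy'eq2 _ (by omega)
          rw [h1, h2]
      rw [key]
      apply IH y'
      · intro s t hst htm
        by_cases hsi : s ≤ i <;> by_cases hti : t ≤ i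
        · rw [hy'eq1 s hsi, hy'eq1 t hti]; exact hmono s t hst (by omega)
        · rw [hy'eq1 s hsi, hy'eq2 t hti]; exact hmono s (t+1) (by omega) (by omega)
        · omega
        · rw [hy'eq2 s hsi, hy'eq2 t hti]; exact hmono (s+1) (t+1) (by omega) (by omega)
      · intro t ht
        by_cases hti : t ≤ i
        · rw [hy'eq1 t hti]; exact hmem t (by omega)
        · rw [hy'eq2 t hti]; exact hmem (t+1) (by omega)

lemma Ioo_subset_of_ordConnected {S : Set ℝ} (h : S.OrdConnected) (hne : S.Nonempty) :
    Set.Ioo (sInf S) (sSup S) ⊆ S := by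
  rintro w ⟨h1, h2⟩
  obtain ⟨u, hu, hu'⟩ := exists_lt_of_csInf_lt hne h1
  obtain ⟨v, hv, hv'⟩ := exists_lt_of_lt_csSup hne h2
  exact h.out hu hv ⟨hu'.le, hv'.le⟩

lemma csInf_lt_csSup' {S : Set ℝ} (hb : BddBelow S) (ha : BddAbove S) (h : S.Nontrivial) :
    sInf S < sSup S := by
  obtain ⟨u, hu, v, hv, huv⟩ := h
  rcases huv.lt_or_gt with h' | h'
  · exact lt_of_le_of_lt (csInf_le hb hu) (lt_of_lt_of_le h' (le_csSup ha hv))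
  · exact lt_of_le_of_lt (csInf_le hb hv) (lt_of_lt_of_le h' (le_csSup ha hu))

/-- for a map of class `V` of a compact interval `Ω = [a,b]`, with `k` monotone
inverse branches `b_j : Ω → I_j` whose images have pairwise disjoint interiors, the operator
`L₀f(x) = (1/k)Σ_j f(b_j x)` satisfies `BV_p(L₀f) ≤ k^{-1/p}·BV_p(f)`. -/
theorem bvp_transfer_contraction (p : ℝ) (hp : 1 ≤ p)
    (a c : ℝ) (hac : a < c)
    (k : ℕ) (hk : 2 ≤ k) (b : Fin k → ℝ → ℝ) (I : Fin k → Set ℝ)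
    (hmono : ∀ j, MonotoneOn (b j) (Set.Icc a c) ∨ AntitoneOn (b j) (Set.Icc a c))
    (hmaps : ∀ j, Set.MapsTo (b j) (Set.Icc a c) (I j))
    (hIsub : ∀ j, I j ⊆ Set.Icc a c)
    (hIint : ∀ j, (I j).OrdConnected)
    (hdisj : ∀ i j, i ≠ j → interior (I i) ∩ interior (I j) = ∅)
    (f : ℝ → ℝ) (hbv : BddAbove (pVarSet p f (Set.Icc a c))) :
    BVp p (fun x => (1 / (k : ℝ)) * ∑ j, f (b j x)) (Set.Icc a c) ≤
      (k : ℝ) ^ (-(1 / p)) * BVp p f (Set.Icc a c) := by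
  classical
  have hp0 : (0:ℝ) < p := lt_of_lt_of_le one_pos hp
  have hac' : a ≤ c := hac.le
  have hB0 : 0 ≤ BVp p f (Set.Icc a c) := bvp_nonneg hp hac' hbv
  have hk0 : (0:ℝ) < (k:ℝ) := by positivity
  have hbdda : ∀ j, BddAbove (I j) := fun j => BddAbove.mono (hIsub j) bddAbove_Icc
  have hbddb : ∀ j, BddBelow (I j) := fun j => BddBelow.mono (hIsub j) bddBelow_Icc
  -- ordering of nondegenerate branches
  have hord : ∀ j j', j ≠ j' → (I j).Nontrivial → (I j').Nontrivial →
      sSup (I j) ≤ sInf (I j') ∨ sSup (I j') ≤ sInf (I j) := by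
    intro j j' hne hj hj'
    by_contra hcon
    push_neg at hcon
    obtain ⟨h1, h2⟩ := hcon
    have hjj : sInf (I j) < sSup (I j) := csInf_lt_csSup' (hbddb j) (hbdda j) hj
    have hjj' : sInf (I j') < sSup (I j') := csInf_lt_csSup' (hbddb j') (hbdda j') hj'
    set w := (max (sInf (I j)) (sInf (I j')) + min (sSup (I j)) (sSup (I j'))) / 2 with hw
    have hmaxmin : max (sInf (I j)) (sInf (I j')) < min (sSup (I j)) (sSup (I j')) := by
      rcases max_cases (sInf (I j)) (sInf (I j')) with ⟨he, _⟩ | ⟨he, _⟩ <;>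
        rcases min_cases (sSup (I j)) (sSup (I j')) with ⟨he', _⟩ | ⟨he', _⟩ <;>
        rw [he, he'] <;> linarith
    have hw1 : w ∈ Set.Ioo (sInf (I j)) (sSup (I j)) := by
      constructor
      · have := le_max_left (sInf (I j)) (sInf (I j')); rw [hw]; linarith
      · have := min_le_left (sSup (I j)) (sSup (I j')); rw [hw]; linarith
    have hw2 : w ∈ Set.Ioo (sInf (I j')) (sSup (I j')) := by
      constructor
      · have := le_max_right (sInf (I j)) (sInf (I j')); rw [hw]; linarith
      · have := min_le_right (sSup (I j)) (sSup (I j')); rw [hw]; linarith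
    have hmem1 : w ∈ interior (I j) :=
      interior_maximal (Ioo_subset_of_ordConnected (hIint j) hj.nonempty) isOpen_Ioo hw1
    have hmem2 : w ∈ interior (I j') :=
      interior_maximal (Ioo_subset_of_ordConnected (hIint j') hj'.nonempty) isOpen_Ioo hw2
    have : w ∈ interior (I j) ∩ interior (I j') := ⟨hmem1, hmem2⟩
    rw [hdisj j j' hne] at this
    exact this
  set L : ℝ → ℝ := fun x => (1 / (k : ℝ)) * ∑ j, f (b j x) with hL
  unfold BVp
  refine Real.sSup_le ?_ (mul_nonneg (Real.rpow_nonneg hk0.le _) hB0)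
  rintro r ⟨n, x, hxmono, hxmem, rfl⟩
  set X : ℕ → ℝ := fun i => x ⟨min i n, Nat.lt_succ_of_le (min_le_right i n)⟩ with hX
  have hXmem : ∀ i, X i ∈ Set.Icc a c := fun i => hxmem _
  have hXmono : ∀ i j, i ≤ j → X i ≤ X j := by
    intro i j hij
    exact hxmono.monotone (Fin.mk_le_mk.mpr (min_le_min hij (le_refl n)))
  have hXval : ∀ (j : Fin n), x j.castSucc = X j.val ∧ x j.succ = X (j.val + 1) := by
    intro j
    constructor
    · rw [hX]; congr 1; exact Fin.ext (by simp [Nat.min_eq_left j.isLt.le])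
    · rw [hX]; congr 1; exact Fin.ext (by simp [Nat.min_eq_left j.isLt])
  have hsum : ∑ j : Fin n, |L (x j.succ) - L (x j.castSucc)| ^ p
      = ∑ i ∈ Finset.range n, |L (X (i+1)) - L (X i)| ^ p := by
    rw [← Fin.sum_univ_eq_sum_range (fun i => |L (X (i+1)) - L (X i)| ^ p) n]
    exact Finset.sum_congr rfl fun j _ => by rw [(hXval j).1, (hXval j).2]
  -- per-step bound by power mean inequality
  have hper : ∀ i : ℕ, |L (X (i+1)) - L (X i)| ^ p
      ≤ ∑ j : Fin k, (1/(k:ℝ)) * |f (b j (X (i+1))) - f (b j (X i))| ^ p := by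
    intro i
    have h1 : L (X (i+1)) - L (X i)
        = ∑ j : Fin k, (1/(k:ℝ)) * (f (b j (X (i+1))) - f (b j (X i))) := by
      rw [hL]
      simp only []
      rw [← mul_sub, ← Finset.sum_sub_distrib, Finset.mul_sum]
    have h2 : |L (X (i+1)) - L (X i)|
        ≤ ∑ j : Fin k, (1/(k:ℝ)) * |f (b j (X (i+1))) - f (b j (X i))| := by
      rw [h1]
      refine le_trans (Finset.abs_sum_le_sum_abs _ _) (Finset.sum_le_sum fun j _ => ?_)
      rw [abs_mul, abs_of_nonneg (by positivity : (0:ℝ) ≤ 1/(k:ℝ))]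
    calc |L (X (i+1)) - L (X i)| ^ p
        ≤ (∑ j : Fin k, (1/(k:ℝ)) * |f (b j (X (i+1))) - f (b j (X i))|) ^ p :=
          Real.rpow_le_rpow (abs_nonneg _) h2 hp0.le
      _ ≤ ∑ j : Fin k, (1/(k:ℝ)) * |f (b j (X (i+1))) - f (b j (X i))| ^ p :=
          Real.rpow_arith_mean_le_arith_mean_rpow Finset.univ _ _
            (fun j _ => by positivity)
            (by rw [Finset.sum_const, Finset.card_univ, Fintype.card_fin, nsmul_eq_mul]
                field_simp)
            (fun j _ => abs_nonneg _) hp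
  set V : Fin k → ℝ := fun j => ∑ i ∈ Finset.range n, |f (b j (X (i+1))) - f (b j (X i))| ^ p
    with hV
  have htot : ∑ i ∈ Finset.range n, |L (X (i+1)) - L (X i)| ^ p
      ≤ (1/(k:ℝ)) * ∑ j : Fin k, V j := by
    calc ∑ i ∈ Finset.range n, |L (X (i+1)) - L (X i)| ^ p
        ≤ ∑ i ∈ Finset.range n, ∑ j : Fin k, (1/(k:ℝ)) * |f (b j (X (i+1))) - f (b j (X i))| ^ p :=
          Finset.sum_le_sum fun i _ => hper i
      _ = ∑ j : Fin k, ∑ i ∈ Finset.range n, (1/(k:ℝ)) * |f (b j (X (i+1))) - f (b j (X i))| ^ p :=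
          Finset.sum_comm
      _ = (1/(k:ℝ)) * ∑ j : Fin k, V j := by
          rw [Finset.mul_sum]
          exact Finset.sum_congr rfl fun j _ => by rw [hV]; simp only []; rw [Finset.mul_sum]
  -- concatenation of branches
  have hconcat : ∀ d (D : Finset (Fin k)), D.card = d → (∀ j ∈ D, (I j).Nontrivial) →
      ∃ m : ℕ, ∃ y : ℕ → ℝ, (∀ s t, s ≤ t → t ≤ m → y s ≤ y t) ∧ (∀ i, i ≤ m → y i ∈ Set.Icc a c) ∧
        (∀ i, i ≤ m → y i = a ∨ ∃ j ∈ D, y i ∈ I j) ∧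
        ∑ j ∈ D, V j ≤ ∑ i ∈ Finset.range m, |f (y (i+1)) - f (y i)| ^ p := by
    intro d
    induction d with
    | zero =>
      intro D hcard _
      have hD : D = ∅ := Finset.card_eq_zero.mp hcard
      subst hD
      exact ⟨0, fun _ => a, fun s t _ _ => le_refl a, fun i _ => ⟨le_refl a, hac'⟩,
        fun i _ => Or.inl rfl, by simp⟩
    | succ d IH =>
      intro D hcard hD
      have hne : D.Nonempty := Finset.card_pos.mp (by omega)
      obtain ⟨j₀, hj₀D, hj₀max⟩ := Finset.exists_max_image D (fun j => sSup (I j)) hne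
      set D' := D.erase j₀ with hD'
      have hcard' : D'.card = d := by rw [hD', Finset.card_erase_of_mem hj₀D, hcard]; omega
      obtain ⟨m', y', hy'mono, hy'mem, hy'inv, hy'sum⟩ :=
        IH D' hcard' (fun j hj => hD j (Finset.mem_of_mem_erase hj))
      have hupper : ∀ i, i ≤ m' → ∀ v ∈ I j₀, y' i ≤ v := by
        intro i him v hv
        rcases hy'inv i him with h | ⟨j, hjD', hyj⟩
        · rw [h]; exact (hIsub j₀ hv).1
        · have hjD : j ∈ D := Finset.mem_of_mem_erase hjD'
          have hjne : j ≠ j₀ := Finset.ne_of_mem_erase hjD'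
          have h1 : sSup (I j) ≤ sInf (I j₀) := by
            rcases hord j j₀ hjne (hD j hjD) (hD j₀ hj₀D) with h | h
            · exact h
            · exfalso
              have ha1 := csInf_lt_csSup' (hbddb j) (hbdda j) (hD j hjD)
              have ha2 := hj₀max j hjD
              linarith
          calc y' i ≤ sSup (I j) := le_csSup (hbdda j) hyj
            _ ≤ sInf (I j₀) := h1
            _ ≤ v := csInf_le (hbddb j₀) hv
      obtain ⟨z, hzmono, hzmem, hzsum⟩ : ∃ z : ℕ → ℝ,
          (∀ s t, s ≤ t → t ≤ n → z s ≤ z t) ∧ (∀ i, i ≤ n → z i ∈ I j₀) ∧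
          V j₀ = ∑ i ∈ Finset.range n, |f (z (i+1)) - f (z i)| ^ p := by
        rcases hmono j₀ with hm | hm
        · exact ⟨fun i => b j₀ (X i),
            fun s t hst _ => hm (hXmem s) (hXmem t) (hXmono s t hst),
            fun i _ => hmaps j₀ (hXmem i), rfl⟩
        · refine ⟨fun i => b j₀ (X (n - i)),
            fun s t hst _ => hm (hXmem (n - t)) (hXmem (n - s)) (hXmono _ _ (by omega)),
            fun i _ => hmaps j₀ (hXmem _), ?_⟩
          rw [hV]
          simp only []
          rw [← Finset.sum_range_reflect (fun i => |f (b j₀ (X (i+1))) - f (b j₀ (X i))| ^ p) n]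
          refine Finset.sum_congr rfl fun i hi => ?_
          have hi' : i < n := Finset.mem_range.mp hi
          rw [show n - 1 - i + 1 = n - i from by omega, show n - (i+1) = n - 1 - i from by omega,
            abs_sub_comm]
      set Y : ℕ → ℝ := fun i => if i ≤ m' then y' i else z (i - (m' + 1)) with hY
      have hYeq1 : ∀ t, t ≤ m' → Y t = y' t := by
        intro t ht; simp only [hY]; rw [if_pos ht]
      have hYeq2 : ∀ t, ¬ t ≤ m' → Y t = z (t - (m' + 1)) := by
        intro t ht; simp only [hY]; rw [if_neg ht]
      refine ⟨m' + (1 + n), Y, ?_, ?_, ?_, ?_⟩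
      · intro s t hst htm
        by_cases hs : s ≤ m' <;> by_cases ht : t ≤ m'
        · rw [hYeq1 s hs, hYeq1 t ht]; exact hy'mono s t hst ht
        · rw [hYeq1 s hs, hYeq2 t ht]
          exact hupper s hs _ (hzmem _ (by omega))
        · omega
        · rw [hYeq2 s hs, hYeq2 t ht]
          exact hzmono _ _ (by omega) (by omega)
      · intro i hi
        by_cases h : i ≤ m'
        · rw [hYeq1 i h]; exact hy'mem i h
        · rw [hYeq2 i h]; exact hIsub j₀ (hzmem _ (by omega))
      · intro i hi
        by_cases h : i ≤ m'
        · rw [hYeq1 i h]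
          rcases hy'inv i h with h' | ⟨j, hj, hj'⟩
          · exact Or.inl h'
          · exact Or.inr ⟨j, Finset.mem_of_mem_erase hj, hj'⟩
        · rw [hYeq2 i h]; exact Or.inr ⟨j₀, hj₀D, hzmem _ (by omega)⟩
      · set T : ℕ → ℝ := fun i => |f (Y (i+1)) - f (Y i)| ^ p with hT
        have hsplit : ∑ i ∈ Finset.range (m' + (1 + n)), T i
            = ∑ i ∈ Finset.range m', T i + (T (m' + 0) + ∑ i ∈ Finset.range n, T (m' + (1 + i))) := by
          rw [Finset.sum_range_add, Finset.sum_range_add, Finset.sum_range_one]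
        have hA : ∑ i ∈ Finset.range m', T i
            = ∑ i ∈ Finset.range m', |f (y' (i+1)) - f (y' i)| ^ p := by
          refine Finset.sum_congr rfl fun i hi => ?_
          have hi' : i < m' := Finset.mem_range.mp hi
          simp only [hT]
          rw [hYeq1 (i+1) (by omega), hYeq1 i (by omega)]
        have hB : ∑ i ∈ Finset.range n, T (m' + (1 + i))
            = ∑ i ∈ Finset.range n, |f (z (i+1)) - f (z i)| ^ p := by
          refine Finset.sum_congr rfl fun i hi => ?_
          simp only [hT]
          rw [hYeq2 (m' + (1 + i) + 1) (by omega), hYeq2 (m' + (1 + i)) (by omega)]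
          rw [show m' + (1 + i) + 1 - (m' + 1) = i + 1 from by omega,
            show m' + (1 + i) - (m' + 1) = i from by omega]
        have hT0 : 0 ≤ T (m' + 0) := by simp only [hT]; positivity
        calc ∑ j ∈ D, V j = V j₀ + ∑ j ∈ D', V j := (Finset.add_sum_erase D V hj₀D).symm
          _ ≤ (∑ i ∈ Finset.range n, |f (z (i+1)) - f (z i)| ^ p)
              + ∑ i ∈ Finset.range m', |f (y' (i+1)) - f (y' i)| ^ p := by
              rw [← hzsum]; exact add_le_add_right hy'sum _
          _ ≤ ∑ i ∈ Finset.range (m' + (1 + n)), T i := by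
              rw [hsplit, hA, hB]; linarith
  -- put everything together
  have hbranch : ∑ j : Fin k, V j ≤ (BVp p f (Set.Icc a c)) ^ p := by
    set D0 : Finset (Fin k) := Finset.univ.filter (fun j => (I j).Nontrivial) with hD0
    have hsplit : ∑ j : Fin k, V j = ∑ j ∈ D0, V j := by
      rw [← Finset.sum_filter_add_sum_filter_not Finset.univ (fun j => (I j).Nontrivial) V]
      rw [hD0]
      have : ∑ j ∈ Finset.univ.filter (fun j => ¬ (I j).Nontrivial), V j = 0 := by
        refine Finset.sum_eq_zero fun j hj => ?_
        have hj' : ¬ (I j).Nontrivial := (Finset.mem_filter.mp hj).2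
        have hsub := Set.not_nontrivial_iff.mp hj'
        rw [hV]
        refine Finset.sum_eq_zero fun i _ => ?_
        rw [hsub (hmaps j (hXmem (i+1))) (hmaps j (hXmem i)), sub_self, abs_zero,
          Real.zero_rpow hp0.ne']
      rw [this, add_zero]
    rw [hsplit]
    obtain ⟨m, y, hymono, hymem, _, hysum⟩ := hconcat D0.card D0 rfl
      (fun j hj => (Finset.mem_filter.mp hj).2)
    exact le_trans hysum (monotone_sum_le hp hac' hbv m y hymono hymem)
  have hle : ∑ j : Fin n, |L (x j.succ) - L (x j.castSucc)| ^ p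
      ≤ (1/(k:ℝ)) * (BVp p f (Set.Icc a c)) ^ p := by
    rw [hsum]
    refine le_trans htot ?_
    exact mul_le_mul_of_nonneg_left hbranch (by positivity)
  have hS0 : 0 ≤ ∑ j : Fin n, |L (x j.succ) - L (x j.castSucc)| ^ p :=
    Finset.sum_nonneg fun j _ => Real.rpow_nonneg (abs_nonneg _) p
  have hfinal : (∑ j : Fin n, |L (x j.succ) - L (x j.castSucc)| ^ p) ^ (1/p)
      ≤ ((1/(k:ℝ)) * (BVp p f (Set.Icc a c)) ^ p) ^ (1/p) :=
    Real.rpow_le_rpow hS0 hle (by positivity)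
  have halg : ((1/(k:ℝ)) * (BVp p f (Set.Icc a c)) ^ p) ^ (1/p)
      = (k:ℝ) ^ (-(1/p)) * BVp p f (Set.Icc a c) := by
    rw [Real.mul_rpow (by positivity) (Real.rpow_nonneg hB0 p)]
    rw [one_div p, Real.rpow_rpow_inv hB0 hp0.ne']
    rw [one_div (k:ℝ), Real.inv_rpow hk0.le, ← Real.rpow_neg hk0.le]
  rw [halg] at hfinal
  exact hfinal
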